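/- Let q, n be positive integers, let A ∈ ℝ^{q×q} be a symmetric matrix, and let ξ_1, …, ξ_n be independent Rademacher random vectors in ℝ^q. Then the variance of the sample average trace estimator satisfies Var[(1/n) ∑_{k=1}^n ξ_kᵀ A ξ_k] = (2/n) ∑_{i≠j} A_{ij}², where the sum ranges over all ordered pairs (i,j) with i ≠ j. -/

import Mathlib

open MeasureTheory ProbabilityTheory Matrix
open scoped ENNReal

/-- The Rademacher distribution on `ℝ`: values `+1` and `-1`, each with probability `1/2`. -/
noncomputable def rademacherDist : Measure ℝ :=
  (1 / 2 : ℝ≥0∞) • Measure.dirac (1 : ℝ) + (1 / 2 : ℝ≥0∞) • Measure.dirac (-1 : ℝ)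

/-- `ξ : Ω → ℝ^q` is a Rademacher random vector (w.r.t. the measure `μ`): its entries are
independent and identically distributed, taking values `±1` each with probability `1/2`. -/
def IsRademacherVector {Ω : Type*} [MeasurableSpace Ω] (μ : Measure Ω) {q : ℕ}
    (ξ : Ω → Fin q → ℝ) : Prop :=
  (∀ i, Measurable fun ω => ξ ω i) ∧
  iIndepFun (fun i ω => ξ ω i) μ ∧
  ∀ i, Measure.map (fun ω => ξ ω i) μ = rademacherDist

lemma integrable_dirac_of_measurable {f : ℝ → ℝ} (hf : Measurable f) (a : ℝ) :
    Integrable f (Measure.dirac a) := by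
  refine ⟨hf.aestronglyMeasurable, ?_⟩
  rw [hasFiniteIntegral_def _ _, lintegral_dirac' _ (by fun_prop)]
  exact enorm_lt_top

lemma rademacher_integral_pow (m : ℕ) :
    ∫ x, x ^ m ∂rademacherDist = if Even m then 1 else 0 := by
  have hm : Measurable fun x : ℝ => x ^ m := measurable_id.pow_const m
  rw [rademacherDist, integral_add_measure, integral_smul_measure, integral_smul_measure,
    integral_dirac' _ _ hm.stronglyMeasurable, integral_dirac' _ _ hm.stronglyMeasurable]
  · by_cases h : Even m
    · rw [if_pos h, h.neg_one_pow]
      norm_num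
    · rw [if_neg h, (Nat.not_even_iff_odd.1 h).neg_one_pow]
      norm_num
  · exact (integrable_dirac_of_measurable hm _).smul_measure (by norm_num)
  · exact (integrable_dirac_of_measurable hm _).smul_measure (by norm_num)

section parity
variable {q : ℕ}

lemma parity2 (i j : Fin q) :
    (∀ t : Fin q, Even ((if t = i then 1 else 0) + (if t = j then (1:ℕ) else 0))) ↔ i = j := by
  constructor
  · intro h
    have hi := h i
    by_cases hij : i = j
    · exact hij
    · simp [hij, Nat.even_iff] at hi
  · rintro rfl t
    exact ⟨if t = i then 1 else 0, by ring⟩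

lemma parity4 (i j k l : Fin q) :
    (∀ t : Fin q, Even ((if t = i then 1 else 0) + (if t = j then 1 else 0) +
        (if t = k then 1 else 0) + (if t = l then (1:ℕ) else 0))) ↔
      ((i = j ∧ k = l) ∨ (i = k ∧ j = l) ∨ (i = l ∧ j = k)) := by
  constructor
  · intro h
    have hi := h i; have hj := h j; have hk := h k; have hl := h l
    rw [Nat.even_iff] at hi hj hk hl
    by_cases h1 : i = j <;> by_cases h2 : i = k <;> by_cases h3 : i = l <;>
      by_cases h4 : j = k <;> by_cases h5 : j = l <;> by_cases h6 : k = l <;>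
      simp_all <;> omega
  · rintro (⟨rfl, rfl⟩ | ⟨rfl, rfl⟩ | ⟨rfl, rfl⟩) t
    · exact ⟨(if t = i then 1 else 0) + (if t = k then 1 else 0), by ring⟩
    · exact ⟨(if t = i then 1 else 0) + (if t = j then 1 else 0), by ring⟩
    · exact ⟨(if t = i then 1 else 0) + (if t = j then 1 else 0), by ring⟩

lemma delta_decomp (i j k l : Fin q) :
    (if (i = j ∧ k = l) ∨ (i = k ∧ j = l) ∨ (i = l ∧ j = k) then (1:ℝ) else 0) =
      (if i = j then (1:ℝ) else 0) * (if k = l then 1 else 0) +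
      (if i = k then 1 else 0) * (if j = l then 1 else 0) +
      (if i = l then 1 else 0) * (if j = k then 1 else 0) -
      2 * (if i = j ∧ i = k ∧ i = l then 1 else 0) := by
  by_cases h1 : i = j <;> by_cases h2 : i = k <;> by_cases h3 : i = l <;>
    by_cases h4 : j = k <;> by_cases h5 : j = l <;> by_cases h6 : k = l <;>
    simp_all <;> norm_num
end parity

section vec
variable {Ω : Type*} [MeasurableSpace Ω] {μ : Measure Ω} [IsProbabilityMeasure μ]
  {q : ℕ} {ξ : Ω → Fin q → ℝ}

lemma rad_ae_pm (h : IsRademacherVector μ ξ) :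
    ∀ᵐ ω ∂μ, ∀ i, ξ ω i = 1 ∨ ξ ω i = -1 := by
  rw [ae_all_iff]
  intro i
  have hs : MeasurableSet {x : ℝ | x = 1 ∨ x = -1} :=
    (measurableSet_singleton 1).union (measurableSet_singleton (-1)) |>.congr (by ext x; simp [or_comm])
  have : μ ((fun ω => ξ ω i) ⁻¹' {x : ℝ | x = 1 ∨ x = -1}ᶜ) = 0 := by
    rw [← Measure.map_apply (h.1 i) hs.compl, h.2.2 i, rademacherDist]
    simp [Measure.dirac_apply' _ hs.compl]
  exact (ae_iff).2 (by simpa [Set.preimage, Set.compl_setOf] using this)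
end vec

section vec2
variable {Ω : Type*} [MeasurableSpace Ω] {μ : Measure Ω} [IsProbabilityMeasure μ]
  {q : ℕ} {ξ : Ω → Fin q → ℝ}

lemma rad_integrable_prod_pow (h : IsRademacherVector μ ξ) (m : Fin q → ℕ) (s : Finset (Fin q)) :
    Integrable (fun ω => ∏ i ∈ s, ξ ω i ^ m i) μ := by
  refine ⟨(Finset.measurable_prod s fun i _ => (h.1 i).pow_const _).aestronglyMeasurable,
    HasFiniteIntegral.of_bounded (C := 1) ?_⟩
  filter_upwards [rad_ae_pm h] with ω hω
  rw [Real.norm_eq_abs, Finset.abs_prod]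
  refine le_of_eq (Finset.prod_eq_one fun i _ => ?_)
  rcases hω i with h1 | h1 <;> simp [abs_pow, h1]

lemma rad_integral_pow (h : IsRademacherVector μ ξ) (i : Fin q) (m : ℕ) :
    ∫ ω, ξ ω i ^ m ∂μ = if Even m then 1 else 0 := by
  have hm : Measurable fun x : ℝ => x ^ m := by fun_prop
  rw [← rademacher_integral_pow m, ← h.2.2 i,
    integral_map (h.1 i).aemeasurable hm.aestronglyMeasurable]

lemma rad_integral_prod_pow (h : IsRademacherVector μ ξ) (m : Fin q → ℕ) (s : Finset (Fin q)) :
    ∫ ω, ∏ i ∈ s, ξ ω i ^ m i ∂μ = ∏ i ∈ s, (if Even (m i) then (1:ℝ) else 0) := by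
  classical
  induction s using Finset.induction_on with
  | empty => simp
  | @insert a s hi ih =>
    have hf : iIndepFun (fun i ω => ξ ω i ^ m i) μ :=
      h.2.1.comp (fun i x => x ^ m i) (fun i => measurable_id.pow_const _)
    have hIndep : IndepFun (∏ j ∈ s, fun ω => ξ ω j ^ m j) (fun ω => ξ ω a ^ m a) μ :=
      hf.indepFun_finsetProd_of_notMem (fun i => (h.1 i).pow_const _) hi
    have hint1 : Integrable (∏ j ∈ s, fun ω' => ξ ω' j ^ m j) μ := by
      refine (rad_integrable_prod_pow h m s).congr ?_
      filter_upwards with ω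
      rw [Finset.prod_apply]
    have hint2 : Integrable (fun ω => ξ ω a ^ m a) μ := by
      simpa using rad_integrable_prod_pow h m {a}
    have hmul := hIndep.integral_mul_eq_mul_integral hint1.aestronglyMeasurable hint2.aestronglyMeasurable
    have heq : (fun ω => ∏ i ∈ insert a s, ξ ω i ^ m i) =
        (∏ j ∈ s, fun ω' => ξ ω' j ^ m j) * fun ω => ξ ω a ^ m a := by
      funext ω
      rw [Pi.mul_apply, Finset.prod_insert hi, Finset.prod_apply, mul_comm]
    rw [heq, hmul, Finset.prod_insert hi, mul_comm]
    congr 1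
    · rw [rad_integral_pow h]
    · rw [← ih]
      congr 1
      funext ω
      rw [Finset.prod_apply]

end vec2

section vec3
variable {Ω : Type*} [MeasurableSpace Ω] {μ : Measure Ω} [IsProbabilityMeasure μ]
  {q : ℕ} {ξ : Ω → Fin q → ℝ}

lemma prod_pow_ite (f : Fin q → ℝ) (i : Fin q) :
    ∏ t, f t ^ (if t = i then 1 else 0) = f i := by
  have : ∀ t, f t ^ (if t = i then 1 else 0) = if t = i then f t else 1 := by
    intro t; split <;> simp
  simp only [this]
  simp [Finset.prod_ite_eq']

lemma rad_integral_mul (h : IsRademacherVector μ ξ) (i j : Fin q) :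
    ∫ ω, ξ ω i * ξ ω j ∂μ = if i = j then 1 else 0 := by
  have key : ∀ ω, ξ ω i * ξ ω j =
      ∏ t, ξ ω t ^ ((if t = i then 1 else 0) + (if t = j then 1 else 0)) := by
    intro ω
    simp only [pow_add, Finset.prod_mul_distrib, prod_pow_ite]
  simp only [key]
  rw [rad_integral_prod_pow h, Finset.prod_boole]
  simp only [Finset.mem_univ, true_implies]
  rw [if_congr (parity2 i j) rfl rfl]

lemma rad_integral_quad (h : IsRademacherVector μ ξ) (i j k l : Fin q) :
    ∫ ω, ξ ω i * ξ ω j * ξ ω k * ξ ω l ∂μ =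
      if (i = j ∧ k = l) ∨ (i = k ∧ j = l) ∨ (i = l ∧ j = k) then 1 else 0 := by
  have key : ∀ ω, ξ ω i * ξ ω j * ξ ω k * ξ ω l =
      ∏ t, ξ ω t ^ ((if t = i then 1 else 0) + (if t = j then 1 else 0) +
        (if t = k then 1 else 0) + (if t = l then 1 else 0)) := by
    intro ω
    simp only [pow_add, Finset.prod_mul_distrib, prod_pow_ite]
  simp only [key]
  rw [rad_integral_prod_pow h, Finset.prod_boole]
  simp only [Finset.mem_univ, true_implies]
  rw [if_congr (parity4 i j k l) rfl rfl]

end vec3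

lemma ite_and_one_zero (p r : Prop) [Decidable p] [Decidable r] :
    (if p ∧ r then (1:ℝ) else 0) = (if p then 1 else 0) * (if r then 1 else 0) := by
  by_cases hp : p <;> by_cases hr : r <;> simp [hp, hr]

section vec4
variable {Ω : Type*} [MeasurableSpace Ω] {μ : Measure Ω} [IsProbabilityMeasure μ]
  {q : ℕ} {ξ : Ω → Fin q → ℝ}

lemma rad_integrable_mul (h : IsRademacherVector μ ξ) (i j : Fin q) :
    Integrable (fun ω => ξ ω i * ξ ω j) μ := by
  refine ⟨((h.1 i).mul (h.1 j)).aestronglyMeasurable,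
    HasFiniteIntegral.of_bounded (C := 1) ?_⟩
  filter_upwards [rad_ae_pm h] with ω hω
  rcases hω i with h1 | h1 <;> rcases hω j with h2 | h2 <;> simp [h1, h2]

lemma rad_integrable_quad (h : IsRademacherVector μ ξ) (i j k l : Fin q) :
    Integrable (fun ω => ξ ω i * ξ ω j * ξ ω k * ξ ω l) μ := by
  refine ⟨(((h.1 i).mul (h.1 j)).mul ((h.1 k)) |>.mul (h.1 l)).aestronglyMeasurable,
    HasFiniteIntegral.of_bounded (C := 1) ?_⟩
  filter_upwards [rad_ae_pm h] with ω hω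
  rcases hω i with h1 | h1 <;> rcases hω j with h2 | h2 <;> rcases hω k with h3 | h3 <;>
    rcases hω l with h4 | h4 <;> simp [h1, h2, h3, h4]

lemma rad_var_quadform (h : IsRademacherVector μ ξ) (A : Matrix (Fin q) (Fin q) ℝ)
    (hA : A.IsSymm) :
    variance (fun ω => ξ ω ⬝ᵥ A *ᵥ ξ ω) μ =
      2 * ∑ p ∈ Finset.univ.filter (fun p : Fin q × Fin q => p.1 ≠ p.2), A p.1 p.2 ^ 2 := by
  classical
  set X : Ω → ℝ := fun ω => ∑ i, ∑ j, A i j * (ξ ω i * ξ ω j) with hX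
  have hXeq : (fun ω => ξ ω ⬝ᵥ A *ᵥ ξ ω) = X := by
    funext ω
    simp only [dotProduct, mulVec, Finset.mul_sum, hX]
    exact Finset.sum_congr rfl fun i _ => Finset.sum_congr rfl fun j _ => by ring
  have hXm : Measurable X := by
    refine Finset.measurable_sum _ fun i _ => Finset.measurable_sum _ fun j _ => ?_
    exact measurable_const.mul ((h.1 i).mul (h.1 j))
  set C : ℝ := ∑ i, ∑ j, |A i j| with hC
  have hbound : ∀ᵐ ω ∂μ, X ω ∈ Set.Icc (-C) C := by
    filter_upwards [rad_ae_pm h] with ω hω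
    have habs : |X ω| ≤ C := by
      refine (Finset.abs_sum_le_sum_abs _ _).trans ?_
      rw [hC]
      refine Finset.sum_le_sum fun i _ => ?_
      refine (Finset.abs_sum_le_sum_abs _ _).trans ?_
      refine Finset.sum_le_sum fun j _ => ?_
      rcases hω i with h1 | h1 <;> rcases hω j with h2 | h2 <;> simp [h1, h2, abs_mul]
    exact ⟨neg_le_of_abs_le habs, le_of_abs_le habs⟩
  have hmem : MemLp X 2 μ := memLp_of_bounded hbound hXm.aestronglyMeasurable 2
  have hEX : ∫ ω, X ω ∂μ = ∑ i, A i i := by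
    simp only [hX]
    rw [integral_finset_sum _ fun i _ => integrable_finset_sum _ fun j _ =>
      (rad_integrable_mul h i j).const_mul (A i j)]
    have : ∀ i, ∫ ω, ∑ j, A i j * (ξ ω i * ξ ω j) ∂μ = ∑ j, A i j * (if i = j then 1 else 0) := by
      intro i
      rw [integral_finset_sum _ fun j _ => (rad_integrable_mul h i j).const_mul (A i j)]
      exact Finset.sum_congr rfl fun j _ => by
        rw [integral_const_mul, rad_integral_mul h]
    simp only [this, mul_ite, mul_one, mul_zero, Finset.sum_ite_eq, Finset.mem_univ, if_true]
  have hEX2 : ∫ ω, X ω ^ 2 ∂μ =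
      (∑ i, A i i) ^ 2 + 2 * ((∑ i, ∑ j, A i j ^ 2) - ∑ i, A i i ^ 2) := by
    have hsq : ∀ ω, X ω ^ 2 = ∑ i, ∑ j, ∑ k, ∑ l,
        (A i j * A k l) * (ξ ω i * ξ ω j * ξ ω k * ξ ω l) := by
      intro ω
      rw [sq, hX, Finset.sum_mul]
      refine Finset.sum_congr rfl fun i _ => ?_
      rw [Finset.sum_mul]
      refine Finset.sum_congr rfl fun j _ => ?_
      rw [Finset.mul_sum]
      refine Finset.sum_congr rfl fun k _ => ?_
      rw [Finset.mul_sum]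
      exact Finset.sum_congr rfl fun l _ => by ring
    simp only [hsq]
    rw [integral_finset_sum _ fun i _ => integrable_finset_sum _ fun j _ =>
      integrable_finset_sum _ fun k _ => integrable_finset_sum _ fun l _ =>
        (rad_integrable_quad h i j k l).const_mul _]
    have hstep : ∀ i, ∫ ω, ∑ j, ∑ k, ∑ l,
        (A i j * A k l) * (ξ ω i * ξ ω j * ξ ω k * ξ ω l) ∂μ =
        ∑ j, ∑ k, ∑ l, (A i j * A k l) *
          (if (i = j ∧ k = l) ∨ (i = k ∧ j = l) ∨ (i = l ∧ j = k) then 1 else 0) := by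
      intro i
      rw [integral_finset_sum _ fun j _ => integrable_finset_sum _ fun k _ =>
        integrable_finset_sum _ fun l _ => (rad_integrable_quad h i j k l).const_mul _]
      refine Finset.sum_congr rfl fun j _ => ?_
      rw [integral_finset_sum _ fun k _ => integrable_finset_sum _ fun l _ =>
        (rad_integrable_quad h i j k l).const_mul _]
      refine Finset.sum_congr rfl fun k _ => ?_
      rw [integral_finset_sum _ fun l _ => (rad_integrable_quad h i j k l).const_mul _]
      refine Finset.sum_congr rfl fun l _ => ?_
      rw [integral_const_mul, rad_integral_quad h]
    simp only [hstep]
    have key : ∀ i j k l : Fin q, (A i j * A k l) *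
        (if (i = j ∧ k = l) ∨ (i = k ∧ j = l) ∨ (i = l ∧ j = k) then (1:ℝ) else 0) =
        (A i j * A k l) * ((if i = j then (1:ℝ) else 0) * (if k = l then 1 else 0))
        + (A i j * A k l) * ((if i = k then (1:ℝ) else 0) * (if j = l then 1 else 0))
        + (A i j * A k l) * ((if i = l then (1:ℝ) else 0) * (if j = k then 1 else 0))
        - 2 * ((A i j * A k l) *
            (((if i = j then (1:ℝ) else 0) * (if i = k then 1 else 0)) *
              (if i = l then 1 else 0))) := by
      intro i j k l
      rw [delta_decomp, ite_and_one_zero, ite_and_one_zero]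
      ring
    simp only [key, Finset.sum_add_distrib, Finset.sum_sub_distrib, ← Finset.mul_sum]
    have S1 : ∑ i, ∑ j, ∑ k, ∑ l, (A i j * A k l) *
        ((if i = j then (1:ℝ) else 0) * (if k = l then 1 else 0)) = (∑ i, A i i) ^ 2 := by
      simp only [mul_ite, ite_mul, mul_zero, zero_mul, mul_one, Finset.sum_ite_eq,
        Finset.sum_ite_eq', Finset.mem_univ, if_true]
      rw [sq, Finset.sum_mul_sum]
      refine Finset.sum_congr rfl fun i _ => ?_
      rw [Finset.sum_comm]
      simp [Finset.sum_ite_eq, Finset.sum_ite_eq']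
    have S2 : ∑ i, ∑ j, ∑ k, ∑ l, (A i j * A k l) *
        ((if i = k then (1:ℝ) else 0) * (if j = l then 1 else 0)) = ∑ i, ∑ j, A i j ^ 2 := by
      simp only [mul_ite, ite_mul, mul_zero, zero_mul, mul_one, Finset.sum_ite_eq,
        Finset.sum_ite_eq', Finset.mem_univ, if_true]
      simp [sq]
    have S3 : ∑ i, ∑ j, ∑ k, ∑ l, (A i j * A k l) *
        ((if i = l then (1:ℝ) else 0) * (if j = k then 1 else 0)) = ∑ i, ∑ j, A i j ^ 2 := by
      have e : ∑ i, ∑ j, ∑ k, ∑ l, (A i j * A k l) *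
          ((if i = l then (1:ℝ) else 0) * (if j = k then 1 else 0)) =
          ∑ i, ∑ j, A i j * A j i := by
        simp [mul_ite, ite_mul, mul_zero, zero_mul, mul_one, Finset.sum_ite_eq,
          Finset.sum_ite_eq']
      rw [e]
      refine Finset.sum_congr rfl fun i _ => Finset.sum_congr rfl fun j _ => ?_
      rw [hA.apply, sq]
    have S4 : ∑ i, ∑ j, ∑ k, ∑ l, (A i j * A k l) *
        (((if i = j then (1:ℝ) else 0) * (if i = k then 1 else 0)) *
          (if i = l then 1 else 0)) = ∑ i, A i i ^ 2 := by
      simp only [mul_ite, ite_mul, mul_zero, zero_mul, mul_one, Finset.sum_ite_eq,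
        Finset.sum_ite_eq', Finset.mem_univ, if_true]
      simp [sq]
    rw [S1, S2, S3, S4]
    ring
  have hfilter : ∑ p ∈ Finset.univ.filter (fun p : Fin q × Fin q => p.1 ≠ p.2), A p.1 p.2 ^ 2 =
      (∑ i, ∑ j, A i j ^ 2) - ∑ i, A i i ^ 2 := by
    rw [Finset.sum_filter, Fintype.sum_prod_type]
    have : ∀ i j : Fin q, (if i ≠ j then A i j ^ 2 else 0) =
        A i j ^ 2 - (if i = j then A i j ^ 2 else 0) := by
      intro i j; by_cases hij : i = j <;> simp [hij]
    simp only [this, Finset.sum_sub_distrib]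
    congr 1
    simp [Finset.sum_ite_eq, Finset.sum_ite_eq']
  rw [hXeq, variance_eq_sub hmem]
  have hpow : ∫ ω, (X ^ 2) ω ∂μ = ∫ ω, X ω ^ 2 ∂μ := by
    simp [Pi.pow_apply]
  rw [hpow, hEX2, hEX, hfilter]
  ring

end vec4

section vec5
variable {Ω : Type*} [MeasurableSpace Ω] {μ : Measure Ω} [IsProbabilityMeasure μ]
  {q : ℕ} {ξ : Ω → Fin q → ℝ}

lemma rad_memℒp_quadform (h : IsRademacherVector μ ξ) (A : Matrix (Fin q) (Fin q) ℝ) :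
    MemLp (fun ω => ξ ω ⬝ᵥ A *ᵥ ξ ω) 2 μ := by
  classical
  set X : Ω → ℝ := fun ω => ∑ i, ∑ j, A i j * (ξ ω i * ξ ω j) with hX
  have hXeq : (fun ω => ξ ω ⬝ᵥ A *ᵥ ξ ω) = X := by
    funext ω
    simp only [dotProduct, mulVec, Finset.mul_sum, hX]
    exact Finset.sum_congr rfl fun i _ => Finset.sum_congr rfl fun j _ => by ring
  have hXm : Measurable X := by
    refine Finset.measurable_sum _ fun i _ => Finset.measurable_sum _ fun j _ => ?_
    exact measurable_const.mul ((h.1 i).mul (h.1 j))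
  set C : ℝ := ∑ i, ∑ j, |A i j| with hC
  have hbound : ∀ᵐ ω ∂μ, X ω ∈ Set.Icc (-C) C := by
    filter_upwards [rad_ae_pm h] with ω hω
    have habs : |X ω| ≤ C := by
      refine (Finset.abs_sum_le_sum_abs _ _).trans ?_
      rw [hC]
      refine Finset.sum_le_sum fun i _ => ?_
      refine (Finset.abs_sum_le_sum_abs _ _).trans ?_
      refine Finset.sum_le_sum fun j _ => ?_
      rcases hω i with h1 | h1 <;> rcases hω j with h2 | h2 <;> simp [h1, h2, abs_mul]
    exact ⟨neg_le_of_abs_le habs, le_of_abs_le habs⟩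
  rw [hXeq]
  exact memLp_of_bounded hbound hXm.aestronglyMeasurable 2
end vec5

/-- The variance of the sample average trace estimator `(1/n) ∑_{k=1}^n ξ_kᵀ A ξ_k` over `n`
independent Rademacher random vectors, for a symmetric matrix `A`, equals
`(2/n) ∑_{i ≠ j} A_{ij}²`. -/
theorem sample_average_trace_estimator_variance
    {q n : ℕ} (hq : 0 < q) (hn : 0 < n)
    (A : Matrix (Fin q) (Fin q) ℝ) (hA : A.IsSymm)
    {Ω : Type*} [MeasurableSpace Ω] (μ : Measure Ω) [IsProbabilityMeasure μ]
    (ξ : Fin n → Ω → Fin q → ℝ)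
    (hindep : iIndepFun (fun k ω => ξ k ω) μ)
    (hrad : ∀ k, IsRademacherVector μ (ξ k)) :
    variance (fun ω => (1 / (n : ℝ)) * ∑ k, (ξ k ω) ⬝ᵥ (A *ᵥ (ξ k ω))) μ =
      (2 / (n : ℝ)) *
        ∑ p ∈ Finset.univ.filter (fun p : Fin q × Fin q => p.1 ≠ p.2), (A p.1 p.2) ^ 2 := by
  classical
  have hg : Measurable fun v : Fin q → ℝ => v ⬝ᵥ A *ᵥ v := by
    simp only [dotProduct, mulVec]
    exact Finset.measurable_sum _ fun i _ => (measurable_pi_apply i).mul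
      (Finset.measurable_sum _ fun j _ => measurable_const.mul (measurable_pi_apply j))
  set Y : Fin n → Ω → ℝ := fun k ω => ξ k ω ⬝ᵥ A *ᵥ ξ k ω with hY
  have hYindep : iIndepFun Y μ :=
    hindep.comp (fun _ => fun v : Fin q → ℝ => v ⬝ᵥ A *ᵥ v) (fun _ => hg)
  have hYmem : ∀ k, MemLp (Y k) 2 μ := fun k => rad_memℒp_quadform (hrad k) A
  have hsum : (fun ω => ∑ k, Y k ω) = ∑ k, Y k := by
    funext ω; simp [Finset.sum_apply]
  have hvar : variance (fun ω => (1 / (n : ℝ)) * ∑ k, Y k ω) μ =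
      (1 / (n : ℝ)) ^ 2 * variance (fun ω => ∑ k, Y k ω) μ := variance_const_mul _ _ μ
  rw [hvar, hsum, IndepFun.variance_sum (fun k _ => hYmem k)
    (fun i _ j _ hij => hYindep.indepFun hij)]
  have : ∀ k : Fin n, variance (Y k) μ =
      2 * ∑ p ∈ Finset.univ.filter (fun p : Fin q × Fin q => p.1 ≠ p.2), (A p.1 p.2) ^ 2 :=
    fun k => rad_var_quadform (hrad k) A hA
  simp only [this, Finset.sum_const, Finset.card_univ, Fintype.card_fin, nsmul_eq_mul]
  have hn' : (n : ℝ) ≠ 0 := Nat.cast_ne_zero.2 hn.ne'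
  field_simp
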